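/- Let d ≥ 2 and let λ, λ' be d-th roots of unity with λ ≠ 1 and λ' ≠ 1. The affine curve C = {(x,y,t') ∈ ℂ³ : 1+x = λ(1+y), y(t'+x) = λ'x(t'+y), t' ∉ {0,1}, x ≠ 0, y ≠ 0, (x/y)^d ≠ 1} has the property that the projection (x,y,t') ↦ t' is generically two-to-one; in particular, the projection (x,y,t') ↦ (x/y)^d is not constant on C when C is nonempty. -/

import Mathlib

open Polynomial in
theorem stmt18 (d : ℕ) (hd : 2 ≤ d) (lam lam' : ℂ)
    (hlam : lam ^ d = 1) (hlam' : lam' ^ d = 1)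
    (hlam1 : lam ≠ 1) (hlam'1 : lam' ≠ 1) :
    let C : Set (ℂ × ℂ × ℂ) := {p |
      1 + p.1 = lam * (1 + p.2.1) ∧
      p.2.1 * (p.2.2 + p.1) = lam' * p.1 * (p.2.2 + p.2.1) ∧
      p.2.2 ≠ 0 ∧ p.2.2 ≠ 1 ∧ p.1 ≠ 0 ∧ p.2.1 ≠ 0 ∧ (p.1 / p.2.1) ^ d ≠ 1}
    (∀ t' : ℂ, {q : ℂ × ℂ | (q.1, q.2, t') ∈ C}.Finite ∧
      {q : ℂ × ℂ | (q.1, q.2, t') ∈ C}.ncard ≤ 2) ∧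
    (C.Nonempty → ∃ p ∈ C, ∃ q ∈ C,
      (p.1 / p.2.1) ^ d ≠ (q.1 / q.2.1) ^ d) := by
  have hd0 : d ≠ 0 := by omega
  have hlam0 : lam ≠ 0 := by
    rintro rfl; rw [zero_pow hd0] at hlam; exact zero_ne_one hlam
  have hlam'0 : lam' ≠ 0 := by
    rintro rfl; rw [zero_pow hd0] at hlam'; exact zero_ne_one hlam'
  intro Cset
  constructor
  · -- fibers have at most two points
    intro t'
    set q : ℂ[X] := Polynomial.C (lam * (1 - lam')) * X ^ 2
        + Polynomial.C (t' * (1 - lam' * lam) + (lam - 1) * (1 - lam')) * X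
        + Polynomial.C (-(lam' * (lam - 1) * t')) with hqdef
    have hA : lam * (1 - lam') ≠ 0 :=
      mul_ne_zero hlam0 (sub_ne_zero.2 (Ne.symm hlam'1))
    have hq : q ≠ 0 := by
      intro h
      have h2 := Polynomial.natDegree_quadratic hA
        (b := t' * (1 - lam' * lam) + (lam - 1) * (1 - lam'))
        (c := -(lam' * (lam - 1) * t'))
      rw [← hqdef, h, Polynomial.natDegree_zero] at h2
      exact two_ne_zero h2.symm
    have hRfin : {y : ℂ | q.IsRoot y}.Finite := Polynomial.finite_setOf_isRoot hq
    have hmaps : ∀ a ∈ {p : ℂ × ℂ | (p.1, p.2, t') ∈ Cset},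
        a.2 ∈ {y : ℂ | q.IsRoot y} := by
      rintro ⟨x, y⟩ ⟨h1, h2, -⟩
      simp only [Set.mem_setOf_eq, IsRoot, hqdef, eval_add, eval_mul, eval_C,
        eval_X, eval_pow]
      linear_combination h2 - (y - lam' * (t' + y)) * h1
    have hinj : Set.InjOn Prod.snd {p : ℂ × ℂ | (p.1, p.2, t') ∈ Cset} := by
      rintro ⟨x1, y1⟩ ⟨h1, -⟩ ⟨x2, y2⟩ ⟨h1', -⟩ h
      simp only at h
      subst h
      have : x1 = x2 := by linear_combination h1 - h1'
      simp [this]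
    have hfin : {p : ℂ × ℂ | (p.1, p.2, t') ∈ Cset}.Finite :=
      Set.Finite.of_finite_image
        (hRfin.subset (by rintro z ⟨a, ha, rfl⟩; exact hmaps a ha)) hinj
    refine ⟨hfin, le_trans (Set.ncard_le_ncard_of_injOn _ hmaps hinj hRfin) ?_⟩
    calc {y : ℂ | q.IsRoot y}.ncard = (q.roots.toFinset : Set ℂ).ncard := by
          congr 1
          ext y
          simp [Polynomial.mem_roots, hq, and_comm]
      _ = q.roots.toFinset.card := Set.ncard_coe_finset _
      _ ≤ Multiset.card q.roots := Multiset.toFinset_card_le _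
      _ ≤ q.natDegree := Polynomial.card_roots' q
      _ ≤ 2 := Polynomial.natDegree_quadratic_le
  · -- nonconstancy
    rintro ⟨⟨x0, y0, t0⟩, hp0⟩
    obtain ⟨g1, g2, g3, g4, g5, g6, g7⟩ := hp0
    set c : ℂ := (x0 / y0) ^ d with hc
    have hc0 : c ≠ 0 := pow_ne_zero _ (div_ne_zero g5 g6)
    -- bad polynomial
    set q4 : ℂ[X] := (1 - Polynomial.C lam' * X) * (X - Polynomial.C lam)
        - Polynomial.C ((lam - 1) * (lam' - 1)) * X with hq4def
    have hev : q4.eval lam = -((lam - 1) * (lam' - 1) * lam) := by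
      simp only [hq4def, eval_sub, eval_mul, eval_add, eval_one, eval_X, eval_C]
      ring
    have hq4 : q4 ≠ 0 := by
      intro h
      rw [h, Polynomial.eval_zero] at hev
      have h0 : (lam - 1) * (lam' - 1) * lam = 0 := by linear_combination hev
      rcases mul_eq_zero.1 h0 with h' | h'
      · rcases mul_eq_zero.1 h' with h'' | h''
        · exact hlam1 (by linear_combination h'')
        · exact hlam'1 (by linear_combination h'')
      · exact hlam0 h' 
    set P : ℂ[X] := (X - Polynomial.C lam) * (X * ((Polynomial.C lam' * X - 1) *
        (q4 * ((X ^ d - Polynomial.C 1) * (X ^ d - Polynomial.C c))))) with hPdef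
    have hP : P ≠ 0 := by
      refine mul_ne_zero (X_sub_C_ne_zero lam) (mul_ne_zero X_ne_zero
        (mul_ne_zero ?_ (mul_ne_zero hq4
          (mul_ne_zero (X_pow_sub_C_ne_zero (by omega) _)
            (X_pow_sub_C_ne_zero (by omega) _)))))
      intro h
      have := congrArg (Polynomial.eval 0) h
      simp at this
    obtain ⟨μ, hμ⟩ := (Polynomial.finite_setOf_isRoot hP).infinite_compl.nonempty
    simp only [Set.mem_compl_iff, Set.mem_setOf_eq, IsRoot, hPdef, hq4def,
      eval_mul, eval_sub, eval_add, eval_pow, eval_X, eval_C, eval_one,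
      mul_eq_zero, not_or, sub_eq_zero] at hμ
    obtain ⟨f1, f2, f3, f4, f5, f6⟩ := hμ
    have hml : μ - lam ≠ 0 := sub_ne_zero.2 f1
    set yv : ℂ := (lam - 1) / (μ - lam) with hyvdef
    have hyv : yv ≠ 0 := div_ne_zero (sub_ne_zero.2 hlam1) hml
    have hden : 1 - lam' * μ ≠ 0 := fun h => f3 (by linear_combination -h)
    set tv : ℂ := μ * yv * (lam' - 1) / (1 - lam' * μ) with htvdef
    have hxv : μ * yv ≠ 0 := mul_ne_zero f2 hyv
    have htv0 : tv ≠ 0 :=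
      div_ne_zero (mul_ne_zero hxv (sub_ne_zero.2 hlam'1)) hden
    have htv1 : tv ≠ 1 := by
      intro h
      rw [htvdef, div_eq_one_iff_eq hden, hyvdef] at h
      field_simp at h
      exact f4 (by linear_combination -h)
    have hquot : (μ * yv) / yv = μ := by
      rw [mul_div_assoc, div_self hyv, mul_one]
    refine ⟨(x0, y0, t0), ⟨g1, g2, g3, g4, g5, g6, g7⟩,
      (μ * yv, yv, tv), ⟨?_, ?_, htv0, htv1, hxv, hyv, ?_⟩, ?_⟩
    · show 1 + μ * yv = lam * (1 + yv)
      rw [hyvdef]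
      field_simp
      ring
    · show yv * (tv + μ * yv) = lam' * (μ * yv) * (tv + yv)
      rw [htvdef, hyvdef]
      field_simp
      linear_combination (lam' - 1) * (mul_inv_cancel₀ hden)
    · show ((μ * yv) / yv) ^ d ≠ 1
      rw [hquot]; exact f5
    · show (x0 / y0) ^ d ≠ ((μ * yv) / yv) ^ d
      rw [hquot]
      exact fun h => f6 h.symm
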